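/- (Fisher information matrix of (Δ, μ, λ).) In the one-sample representation of the two-sample model, assume additionally ∫ s(x) g(x) dx = 0. Then E[l_Δ(Z,U)²] = (1−λ)·I, E[l_Δ(Z,U)·l_μ(Z,U)] = (1−λ)·I, E[l_μ(Z,U)²] = I, E[l_λ(Z,U)²] = λ⁻¹ + (1−λ)⁻¹, E[l_Δ(Z,U)·l_λ(Z,U)] = 0, and E[l_μ(Z,U)·l_λ(Z,U)] = 0; that is, the Fisher information matrix of the parameters (Δ, μ, λ) equals the 3×3 matrix with rows ((1−λ)I, (1−λ)I, 0), ((1−λ)I, I, 0), (0, 0, λ⁻¹+(1−λ)⁻¹). -/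

import Mathlib

open MeasureTheory

noncomputable section

/-- `f` is a probability density on `ℝ`. -/
def IsProbDensity (f : ℝ → ℝ) : Prop :=
  (∀ x, 0 ≤ f x) ∧ Integrable f ∧ ∫ x, f x = 1

/-- The joint law of `(Z,U)` in the one-sample representation of the two-sample model:
`Z ~ Bernoulli(λ)`; conditionally on `Z = 1`, `U` has density `g(·−μ)`; conditionally on
`Z = 0`, `U` has density `g(·−μ−Δ)`. -/
def jointLaw (l μ Δ : ℝ) (g : ℝ → ℝ) : Measure (ℝ × ℝ) :=
  (ENNReal.ofReal l) •
      ((Measure.dirac (1 : ℝ)).prod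
        (volume.withDensity fun u => ENNReal.ofReal (g (u - μ)))) +
    (ENNReal.ofReal (1 - l)) •
      ((Measure.dirac (0 : ℝ)).prod
        (volume.withDensity fun u => ENNReal.ofReal (g (u - μ - Δ))))

/-- Score for `Δ`: `l_Δ(z,u) = −(1−z)·s(u−μ−Δ)`. -/
def scoreDelta (s : ℝ → ℝ) (μ Δ : ℝ) (z u : ℝ) : ℝ := -(1 - z) * s (u - μ - Δ)

/-- Score for `μ`: `l_μ(z,u) = −z·s(u−μ) − (1−z)·s(u−μ−Δ)`. -/
def scoreMu (s : ℝ → ℝ) (μ Δ : ℝ) (z u : ℝ) : ℝ :=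
  -z * s (u - μ) - (1 - z) * s (u - μ - Δ)

/-- Score for `λ`: `l_λ(z,u) = z/λ − (1−z)/(1−λ)`. -/
def scoreLambda (l : ℝ) (z : ℝ) : ℝ := z / l - (1 - z) / (1 - l)

/-- The efficient score `l*(z,u) = z(1−λ)·s(u−μ) − λ(1−z)·s(u−μ−Δ)`. -/
def scoreStar (s : ℝ → ℝ) (l μ Δ : ℝ) (z u : ℝ) : ℝ :=
  z * (1 - l) * s (u - μ) - l * (1 - z) * s (u - μ - Δ)

/-- From the FTC hypothesis and the fact that `g` is a probability density, `g'` is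
interval integrable on every interval. -/
lemma gprime_intervalIntegrable (g g' : ℝ → ℝ) (hg : IsProbDensity g)
    (hAC : ∀ a c : ℝ, g c - g a = ∫ x in a..c, g' x) :
    ∀ p q : ℝ, IntervalIntegrable g' volume p q := by
  obtain ⟨a, b, hab⟩ : ∃ a b : ℝ, g a ≠ g b := by
    by_contra h
    push_neg at h
    have hgconst : g = fun _ => g 0 := funext fun x => h x 0
    have hgi := hg.2.1
    rw [hgconst] at hgi
    rcases integrable_const_iff.1 hgi with h0 | hfin
    · have h2 := hg.2.2
      rw [hgconst, h0] at h2
      simp at h2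
    · have hfin := hfin.measure_univ_lt_top
      simp [Real.volume_univ] at hfin
  have hIIab : IntervalIntegrable g' volume a b := by
    by_contra hcon
    have := hAC a b
    rw [intervalIntegral.integral_undef hcon] at this
    exact hab (by linarith)
  have hIIa : ∀ c, IntervalIntegrable g' volume a c := by
    intro c
    by_contra hc
    have h1 : g c = g a := by
      have := hAC a c
      rw [intervalIntegral.integral_undef hc] at this
      linarith
    have hbc : ¬ IntervalIntegrable g' volume b c := fun h => hc (hIIab.trans h)
    have h2 : g c = g b := by
      have := hAC b c
      rw [intervalIntegral.integral_undef hbc] at this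
      linarith
    exact hab (h1.symm.trans h2)
  exact fun p q => (hIIa p).symm.trans (hIIa q)

lemma gprime_aemeasurable (g g' : ℝ → ℝ) (hg : IsProbDensity g)
    (hAC : ∀ a c : ℝ, g c - g a = ∫ x in a..c, g' x) :
    AEMeasurable g' volume := by
  have hII := gprime_intervalIntegrable g g' hg hAC
  have hcov : (⋃ n : ℕ, Set.Ioc (-(n : ℝ)) n) = Set.univ := by
    ext x
    simp only [Set.mem_iUnion, Set.mem_Ioc, Set.mem_univ, iff_true]
    obtain ⟨n, hn⟩ := exists_nat_gt |x|
    exact ⟨n, by cases abs_lt.1 hn; constructor <;> linarith⟩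
  have h : AEStronglyMeasurable g' (volume.restrict (⋃ n : ℕ, Set.Ioc (-(n : ℝ)) n)) := by
    refine aestronglyMeasurable_iUnion_iff.2 fun n => ?_
    have hle : (-(n : ℝ)) ≤ n := by simp [neg_le_self_iff]
    exact ((intervalIntegrable_iff_integrableOn_Ioc_of_le hle).1 (hII _ _)).aestronglyMeasurable
  rw [hcov, Measure.restrict_univ] at h
  exact h.aemeasurable


section machinery

variable (g : ℝ → ℝ)

/-- integral against one component measure -/
lemma part_integral (hg0 : ∀ x, 0 ≤ g x) (hgae : AEMeasurable g volume)
    (z₀ c : ℝ) (ψ : ℝ × ℝ → ℝ) :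
    ∫ p, ψ p ∂((Measure.dirac z₀).prod
        (volume.withDensity fun u => ENNReal.ofReal (g (u - c)))) =
      ∫ x, g x * ψ (z₀, x + c) := by
  have hshift : AEMeasurable (fun u : ℝ => g (u - c)) volume :=
    hgae.comp_quasiMeasurePreserving
      (measurePreserving_sub_right volume c).quasiMeasurePreserving
  rw [Measure.dirac_prod, (measurableEmbedding_prodMk_left z₀).integral_map]
  rw [show (fun u : ℝ => ENNReal.ofReal (g (u - c)))
      = fun u : ℝ => (((g (u - c)).toNNReal : NNReal) : ENNReal) from rfl]
  rw [integral_withDensity_eq_integral_smul₀ hshift.real_toNNReal]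
  have heq : (fun u : ℝ => ((g (u - c)).toNNReal : NNReal) • ψ (z₀, u))
      = fun u : ℝ => (fun x : ℝ => g x * ψ (z₀, x + c)) (u - c) := by
    funext u
    simp only [NNReal.smul_def, NNReal.coe_mk, Real.coe_toNNReal _ (hg0 _), smul_eq_mul,
      sub_add_cancel]
  rw [heq, integral_sub_right_eq_self (fun x : ℝ => g x * ψ (z₀, x + c)) c]

lemma part_integrable (hg0 : ∀ x, 0 ≤ g x) (hgae : AEMeasurable g volume)
    (z₀ c : ℝ) (ψ : ℝ × ℝ → ℝ) :
    Integrable ψ ((Measure.dirac z₀).prod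
        (volume.withDensity fun u => ENNReal.ofReal (g (u - c)))) ↔
      Integrable (fun x => g x * ψ (z₀, x + c)) volume := by
  have hshift : AEMeasurable (fun u : ℝ => g (u - c)) volume :=
    hgae.comp_quasiMeasurePreserving
      (measurePreserving_sub_right volume c).quasiMeasurePreserving
  rw [Measure.dirac_prod, (measurableEmbedding_prodMk_left z₀).integrable_map_iff]
  rw [show (fun u : ℝ => ENNReal.ofReal (g (u - c)))
      = fun u : ℝ => (((g (u - c)).toNNReal : NNReal) : ENNReal) from rfl]
  rw [integrable_withDensity_iff_integrable_coe_smul₀ hshift.real_toNNReal]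
  have heq : (fun u : ℝ => (((g (u - c)).toNNReal : NNReal) : ℝ) • (ψ ∘ Prod.mk z₀) u)
      = (fun x : ℝ => g x * ψ (z₀, x + c)) ∘ (fun u : ℝ => u - c) := by
    funext u
    simp only [Function.comp_apply, Real.coe_toNNReal _ (hg0 _), smul_eq_mul, sub_add_cancel]
  rw [heq]
  exact (measurePreserving_sub_right volume c).integrable_comp_emb
    (MeasurableEquiv.subRight c).measurableEmbedding

lemma part_aesm (z₀ c : ℝ) (ψ : ℝ × ℝ → ℝ) (h : AEMeasurable (fun u => ψ (z₀, u)) volume) :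
    AEStronglyMeasurable ψ ((Measure.dirac z₀).prod
        (volume.withDensity fun u => ENNReal.ofReal (g (u - c)))) := by
  rw [Measure.dirac_prod]
  exact ((measurableEmbedding_prodMk_left z₀).aestronglyMeasurable_map_iff).2
    ((h.aestronglyMeasurable).mono_ac (withDensity_absolutelyContinuous _ _))

end machinery

lemma jointLaw_eq (l μ Δ : ℝ) (g : ℝ → ℝ) :
    jointLaw l μ Δ g =
      (ENNReal.ofReal l) • ((Measure.dirac (1 : ℝ)).prod
        (volume.withDensity fun u => ENNReal.ofReal (g (u - μ)))) +
      (ENNReal.ofReal (1 - l)) • ((Measure.dirac (0 : ℝ)).prod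
        (volume.withDensity fun u => ENNReal.ofReal (g (u - (μ + Δ))))) := by
  simp only [jointLaw, sub_sub]

lemma master_integral
    {Ω : Type*} [MeasurableSpace Ω] (P : Measure Ω)
    (Z U : Ω → ℝ) (hZ : Measurable Z) (hU : Measurable U)
    (l μ Δ : ℝ) (hl0 : 0 < l) (hl1 : l < 1)
    (g : ℝ → ℝ) (hg0 : ∀ x, 0 ≤ g x) (hgae : AEMeasurable g volume)
    (hlaw : P.map (fun ω => (Z ω, U ω)) = jointLaw l μ Δ g)
    (ψ : ℝ × ℝ → ℝ)
    (hm1 : AEMeasurable (fun u => ψ (1, u)) volume)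
    (hm0 : AEMeasurable (fun u => ψ (0, u)) volume)
    (hi1 : Integrable (fun x => g x * ψ (1, x + μ)) volume)
    (hi0 : Integrable (fun x => g x * ψ (0, x + (μ + Δ))) volume) :
    ∫ ω, ψ (Z ω, U ω) ∂P =
      l * (∫ x, g x * ψ (1, x + μ)) + (1 - l) * ∫ x, g x * ψ (0, x + (μ + Δ)) := by
  have haesm : AEStronglyMeasurable ψ (jointLaw l μ Δ g) := by
    rw [jointLaw_eq]
    exact ((part_aesm g 1 μ ψ hm1).smul_measure _).add_measure
      ((part_aesm g 0 (μ + Δ) ψ hm0).smul_measure _)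
  have hmap : ∫ ω, ψ (Z ω, U ω) ∂P = ∫ p, ψ p ∂(jointLaw l μ Δ g) := by
    rw [← hlaw]
    exact (integral_map (hZ.prodMk hU).aemeasurable (hlaw ▸ haesm)).symm
  rw [hmap, jointLaw_eq]
  have hl0' : ENNReal.ofReal l ≠ 0 := by
    simp [ENNReal.ofReal_eq_zero, not_le, hl0]
  have hl1' : ENNReal.ofReal (1 - l) ≠ 0 := by
    simp only [ne_eq, ENNReal.ofReal_eq_zero, not_le]
    linarith
  have hA : Integrable ψ ((ENNReal.ofReal l) • ((Measure.dirac (1 : ℝ)).prod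
      (volume.withDensity fun u => ENNReal.ofReal (g (u - μ))))) :=
    (integrable_smul_measure hl0' ENNReal.ofReal_ne_top).2
      ((part_integrable g hg0 hgae 1 μ ψ).2 hi1)
  have hB : Integrable ψ ((ENNReal.ofReal (1 - l)) • ((Measure.dirac (0 : ℝ)).prod
      (volume.withDensity fun u => ENNReal.ofReal (g (u - (μ + Δ)))))) :=
    (integrable_smul_measure hl1' ENNReal.ofReal_ne_top).2
      ((part_integrable g hg0 hgae 0 (μ + Δ) ψ).2 hi0)
  rw [integral_add_measure hA hB, integral_smul_measure, integral_smul_measure,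
    part_integral g hg0 hgae 1 μ ψ, part_integral g hg0 hgae 0 (μ + Δ) ψ,
    ENNReal.toReal_ofReal hl0.le, ENNReal.toReal_ofReal (by linarith : (0:ℝ) ≤ 1 - l),
    smul_eq_mul, smul_eq_mul]

lemma master_undef
    {Ω : Type*} [MeasurableSpace Ω] (P : Measure Ω)
    (Z U : Ω → ℝ) (hZ : Measurable Z) (hU : Measurable U)
    (l μ Δ : ℝ) (hl0 : 0 < l) (hl1 : l < 1)
    (g : ℝ → ℝ) (hg0 : ∀ x, 0 ≤ g x) (hgae : AEMeasurable g volume)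
    (hlaw : P.map (fun ω => (Z ω, U ω)) = jointLaw l μ Δ g)
    (ψ : ℝ × ℝ → ℝ)
    (hm1 : AEMeasurable (fun u => ψ (1, u)) volume)
    (hm0 : AEMeasurable (fun u => ψ (0, u)) volume)
    (hni : ¬ Integrable (fun x => g x * ψ (0, x + (μ + Δ))) volume) :
    ∫ ω, ψ (Z ω, U ω) ∂P = 0 := by
  have haesm : AEStronglyMeasurable ψ (jointLaw l μ Δ g) := by
    rw [jointLaw_eq]
    exact ((part_aesm g 1 μ ψ hm1).smul_measure _).add_measure
      ((part_aesm g 0 (μ + Δ) ψ hm0).smul_measure _)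
  have hmap : ∫ ω, ψ (Z ω, U ω) ∂P = ∫ p, ψ p ∂(jointLaw l μ Δ g) := by
    rw [← hlaw]
    exact (integral_map (hZ.prodMk hU).aemeasurable (hlaw ▸ haesm)).symm
  rw [hmap]
  refine integral_undef fun hcon => hni ?_
  rw [jointLaw_eq] at hcon
  have hl1' : ENNReal.ofReal (1 - l) ≠ 0 := by
    simp only [ne_eq, ENNReal.ofReal_eq_zero, not_le]
    linarith
  have h2 := (integrable_add_measure.1 hcon).2
  have h3 := (integrable_smul_measure hl1' ENNReal.ofReal_ne_top).1 h2
  exact (part_integrable g hg0 hgae 0 (μ + Δ) ψ).1 h3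

/-- **Fisher information matrix of `(Δ, μ, λ)`.**  In the one-sample representation of the
two-sample model, assuming additionally `∫ s g = 0`, the entries of the Fisher information
matrix of `(Δ, μ, λ)` are: `E[l_Δ²] = (1−λ)I`, `E[l_Δ l_μ] = (1−λ)I`, `E[l_μ²] = I`,
`E[l_λ²] = λ⁻¹ + (1−λ)⁻¹`, `E[l_Δ l_λ] = 0`, `E[l_μ l_λ] = 0`, with `I = ∫ s² g`. -/
theorem fisher_information_matrix_entries
    {Ω : Type*} [MeasurableSpace Ω] (P : Measure Ω) [IsProbabilityMeasure P]
    (Z U : Ω → ℝ) (hZ : Measurable Z) (hU : Measurable U)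
    (l μ Δ : ℝ) (hl0 : 0 < l) (hl1 : l < 1)
    (g g' : ℝ → ℝ) (hg : IsProbDensity g)
    (hAC : ∀ a c : ℝ, g c - g a = ∫ x in a..c, g' x)
    (hFI : Integrable fun x => (g' x / g x) ^ 2 * g x)
    (hmean : ∫ x, (g' x / g x) * g x = 0)
    (hlaw : P.map (fun ω => (Z ω, U ω)) = jointLaw l μ Δ g) :
    (∫ ω, (scoreDelta (fun x => g' x / g x) μ Δ (Z ω) (U ω)) ^ 2 ∂P =
        (1 - l) * ∫ x, (g' x / g x) ^ 2 * g x) ∧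
      (∫ ω, scoreDelta (fun x => g' x / g x) μ Δ (Z ω) (U ω) *
          scoreMu (fun x => g' x / g x) μ Δ (Z ω) (U ω) ∂P =
        (1 - l) * ∫ x, (g' x / g x) ^ 2 * g x) ∧
      (∫ ω, (scoreMu (fun x => g' x / g x) μ Δ (Z ω) (U ω)) ^ 2 ∂P =
        ∫ x, (g' x / g x) ^ 2 * g x) ∧
      (∫ ω, (scoreLambda l (Z ω)) ^ 2 ∂P = l⁻¹ + (1 - l)⁻¹) ∧
      (∫ ω, scoreDelta (fun x => g' x / g x) μ Δ (Z ω) (U ω) *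
          scoreLambda l (Z ω) ∂P = 0) ∧
      (∫ ω, scoreMu (fun x => g' x / g x) μ Δ (Z ω) (U ω) *
          scoreLambda l (Z ω) ∂P = 0) := by
  have hl1' : (0:ℝ) < 1 - l := by linarith
  have hgae : AEMeasurable g volume := hg.2.1.aemeasurable
  have hg'ae : AEMeasurable g' volume := gprime_aemeasurable g g' hg hAC
  have hsae : AEMeasurable (fun x => g' x / g x) volume := hg'ae.div hgae
  have hsμ : AEMeasurable (fun u : ℝ => g' (u - μ) / g (u - μ)) volume := by
    simpa [Function.comp_def] using hsae.comp_quasiMeasurePreserving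
      (measurePreserving_sub_right volume μ).quasiMeasurePreserving
  have hsd : AEMeasurable (fun u : ℝ => g' (u - μ - Δ) / g (u - μ - Δ)) volume := by
    have := hsae.comp_quasiMeasurePreserving
      (measurePreserving_sub_right volume (μ + Δ)).quasiMeasurePreserving
    simpa [Function.comp_def, sub_sub] using this
  have hmDelta : ∀ z : ℝ,
      AEMeasurable (fun u : ℝ => scoreDelta (fun x => g' x / g x) μ Δ z u) volume := by
    intro z; unfold scoreDelta; exact hsd.const_mul _
  have hmMu : ∀ z : ℝ,
      AEMeasurable (fun u : ℝ => scoreMu (fun x => g' x / g x) μ Δ z u) volume := by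
    intro z; unfold scoreMu; exact (hsμ.const_mul _).sub (hsd.const_mul _)
  have hmSL : ∀ z : ℝ, AEMeasurable (fun _ : ℝ => (scoreLambda l z) ^ 2) volume :=
    fun z => aemeasurable_const
  have hmDL : ∀ z : ℝ, AEMeasurable
      (fun u : ℝ => scoreDelta (fun x => g' x / g x) μ Δ z u * scoreLambda l z) volume :=
    fun z => (hmDelta z).mul aemeasurable_const
  have hmML : ∀ z : ℝ, AEMeasurable
      (fun u : ℝ => scoreMu (fun x => g' x / g x) μ Δ z u * scoreLambda l z) volume :=
    fun z => (hmMu z).mul aemeasurable_const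
  -- Entry 1
  have entry1 : ∫ ω, (scoreDelta (fun x => g' x / g x) μ Δ (Z ω) (U ω)) ^ 2 ∂P =
      (1 - l) * ∫ x, (g' x / g x) ^ 2 * g x := by
    set ψ : ℝ × ℝ → ℝ := fun p => (scoreDelta (fun x => g' x / g x) μ Δ p.1 p.2) ^ 2 with hψ
    have e1 : (fun x => g x * ψ (1, x + μ)) = fun _ => (0:ℝ) := by
      funext x; simp [hψ, scoreDelta]
    have e0 : (fun x => g x * ψ (0, x + (μ + Δ))) = fun x => (g' x / g x) ^ 2 * g x := by
      funext x
      simp only [hψ, scoreDelta, sub_sub, add_sub_cancel_right, neg_mul, sub_zero, neg_sub]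
      ring
    have key := master_integral P Z U hZ hU l μ Δ hl0 hl1 g hg.1 hgae hlaw ψ
      ((hmDelta 1).pow_const 2) ((hmDelta 0).pow_const 2)
      (by rw [e1]; exact integrable_const_iff.2 (Or.inl rfl))
      (by rw [e0]; exact hFI)
    refine key.trans ?_
    rw [e1, e0]
    simp
  -- Entry 2
  have entry2 : ∫ ω, scoreDelta (fun x => g' x / g x) μ Δ (Z ω) (U ω) *
      scoreMu (fun x => g' x / g x) μ Δ (Z ω) (U ω) ∂P =
      (1 - l) * ∫ x, (g' x / g x) ^ 2 * g x := by
    set ψ : ℝ × ℝ → ℝ := fun p => scoreDelta (fun x => g' x / g x) μ Δ p.1 p.2 *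
      scoreMu (fun x => g' x / g x) μ Δ p.1 p.2 with hψ
    have e1 : (fun x => g x * ψ (1, x + μ)) = fun _ => (0:ℝ) := by
      funext x; simp [hψ, scoreDelta, scoreMu]
    have e0 : (fun x => g x * ψ (0, x + (μ + Δ))) = fun x => (g' x / g x) ^ 2 * g x := by
      funext x
      simp only [hψ, scoreDelta, scoreMu, sub_sub, add_sub_cancel_right, neg_mul, sub_zero,
        neg_sub, neg_zero, zero_mul, zero_sub]
      ring
    have key := master_integral P Z U hZ hU l μ Δ hl0 hl1 g hg.1 hgae hlaw ψ
      ((hmDelta 1).mul (hmMu 1)) ((hmDelta 0).mul (hmMu 0))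
      (by rw [e1]; exact integrable_const_iff.2 (Or.inl rfl))
      (by rw [e0]; exact hFI)
    refine key.trans ?_
    rw [e1, e0]
    simp
  -- Entry 3
  have entry3 : ∫ ω, (scoreMu (fun x => g' x / g x) μ Δ (Z ω) (U ω)) ^ 2 ∂P =
      ∫ x, (g' x / g x) ^ 2 * g x := by
    set ψ : ℝ × ℝ → ℝ := fun p => (scoreMu (fun x => g' x / g x) μ Δ p.1 p.2) ^ 2 with hψ
    have e1 : (fun x => g x * ψ (1, x + μ)) = fun x => (g' x / g x) ^ 2 * g x := by
      funext x
      simp only [hψ, scoreMu, sub_sub, add_sub_cancel_right, neg_mul, sub_self, zero_mul,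
        sub_zero, one_mul]
      ring
    have e0 : (fun x => g x * ψ (0, x + (μ + Δ))) = fun x => (g' x / g x) ^ 2 * g x := by
      funext x
      simp only [hψ, scoreMu, sub_sub, add_sub_cancel_right, neg_mul, neg_zero, zero_mul,
        sub_zero, zero_sub, one_mul]
      ring
    have key := master_integral P Z U hZ hU l μ Δ hl0 hl1 g hg.1 hgae hlaw ψ
      ((hmMu 1).pow_const 2) ((hmMu 0).pow_const 2)
      (by rw [e1]; exact hFI) (by rw [e0]; exact hFI)
    refine key.trans ?_
    rw [e1, e0]
    ring
  -- Entry 4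
  have entry4 : ∫ ω, (scoreLambda l (Z ω)) ^ 2 ∂P = l⁻¹ + (1 - l)⁻¹ := by
    set ψ : ℝ × ℝ → ℝ := fun p => (scoreLambda l p.1) ^ 2 with hψ
    have e1 : (fun x => g x * ψ (1, x + μ)) = fun x => g x * l⁻¹ ^ 2 := by
      funext x; simp only [hψ, scoreLambda, sub_self, zero_div, sub_zero, one_div]
    have e0 : (fun x => g x * ψ (0, x + (μ + Δ))) = fun x => g x * (1 - l)⁻¹ ^ 2 := by
      funext x
      simp only [hψ, scoreLambda, zero_div, sub_zero]
      rw [div_eq_mul_inv]; ring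
    have key := master_integral P Z U hZ hU l μ Δ hl0 hl1 g hg.1 hgae hlaw ψ
      (hmSL 1) (hmSL 0)
      (by rw [e1]; exact hg.2.1.mul_const _)
      (by rw [e0]; exact hg.2.1.mul_const _)
    refine key.trans ?_
    rw [e1, e0, integral_mul_const, integral_mul_const, hg.2.2]
    have hl0' : l ≠ 0 := ne_of_gt hl0
    have hl1'' : (1:ℝ) - l ≠ 0 := ne_of_gt hl1'
    field_simp
  -- Entries 5 and 6
  by_cases hc : Integrable (fun x => g' x / g x * g x) volume
  case pos =>
    have entry5 : ∫ ω, scoreDelta (fun x => g' x / g x) μ Δ (Z ω) (U ω) *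
        scoreLambda l (Z ω) ∂P = 0 := by
      set ψ : ℝ × ℝ → ℝ := fun p => scoreDelta (fun x => g' x / g x) μ Δ p.1 p.2 *
        scoreLambda l p.1 with hψ
      have e1 : (fun x => g x * ψ (1, x + μ)) = fun _ => (0:ℝ) := by
        funext x; simp [hψ, scoreDelta]
      have e0 : (fun x => g x * ψ (0, x + (μ + Δ))) =
          fun x => (g' x / g x * g x) * (1 - l)⁻¹ := by
        funext x
        simp only [hψ, scoreDelta, scoreLambda, sub_sub, add_sub_cancel_right, neg_mul,
          sub_zero, zero_div, zero_sub, one_mul, mul_neg, neg_neg]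
        rw [div_eq_mul_inv]; ring
      have key := master_integral P Z U hZ hU l μ Δ hl0 hl1 g hg.1 hgae hlaw ψ
        (hmDL 1) (hmDL 0)
        (by rw [e1]; exact integrable_const_iff.2 (Or.inl rfl))
        (by rw [e0]; exact hc.mul_const _)
      refine key.trans ?_
      rw [e1, e0, integral_mul_const, hmean]
      simp
    have entry6 : ∫ ω, scoreMu (fun x => g' x / g x) μ Δ (Z ω) (U ω) *
        scoreLambda l (Z ω) ∂P = 0 := by
      set ψ : ℝ × ℝ → ℝ := fun p => scoreMu (fun x => g' x / g x) μ Δ p.1 p.2 *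
        scoreLambda l p.1 with hψ
      have e1 : (fun x => g x * ψ (1, x + μ)) = fun x => (g' x / g x * g x) * (-l⁻¹) := by
        funext x
        simp only [hψ, scoreMu, scoreLambda, sub_sub, add_sub_cancel_right, neg_mul,
          sub_self, zero_mul, sub_zero, one_mul, zero_div, one_div]
        rw [div_eq_mul_inv]; ring
      have e0 : (fun x => g x * ψ (0, x + (μ + Δ))) =
          fun x => (g' x / g x * g x) * (1 - l)⁻¹ := by
        funext x
        simp only [hψ, scoreMu, scoreLambda, sub_sub, add_sub_cancel_right, neg_mul,
          neg_zero, zero_mul, sub_zero, zero_sub, one_mul, zero_div]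
        rw [div_eq_mul_inv]; ring
      have key := master_integral P Z U hZ hU l μ Δ hl0 hl1 g hg.1 hgae hlaw ψ
        (hmML 1) (hmML 0)
        (by rw [e1]; exact hc.mul_const _)
        (by rw [e0]; exact hc.mul_const _)
      refine key.trans ?_
      rw [e1, e0, integral_mul_const, integral_mul_const, hmean]
      simp
    exact ⟨entry1, entry2, entry3, entry4, entry5, entry6⟩
  case neg =>
    have hni : ∀ c : ℝ, c ≠ 0 →
        ¬ Integrable (fun x => (g' x / g x * g x) * c) volume := by
      intro c hc0 h
      have h2 := h.mul_const c⁻¹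
      have heq : (fun x => ((g' x / g x * g x) * c) * c⁻¹) = fun x => g' x / g x * g x := by
        funext x; rw [mul_assoc, mul_inv_cancel₀ hc0, mul_one]
      rw [heq] at h2; exact hc h2
    have entry5 : ∫ ω, scoreDelta (fun x => g' x / g x) μ Δ (Z ω) (U ω) *
        scoreLambda l (Z ω) ∂P = 0 := by
      set ψ : ℝ × ℝ → ℝ := fun p => scoreDelta (fun x => g' x / g x) μ Δ p.1 p.2 *
        scoreLambda l p.1 with hψ
      have e0 : (fun x => g x * ψ (0, x + (μ + Δ))) =
          fun x => (g' x / g x * g x) * (1 - l)⁻¹ := by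
        funext x
        simp only [hψ, scoreDelta, scoreLambda, sub_sub, add_sub_cancel_right, neg_mul,
          sub_zero, zero_div, zero_sub, one_mul, mul_neg, neg_neg]
        rw [div_eq_mul_inv]; ring
      exact master_undef P Z U hZ hU l μ Δ hl0 hl1 g hg.1 hgae hlaw ψ
        (hmDL 1) (hmDL 0)
        (by rw [e0]; exact hni _ (by positivity))
    have entry6 : ∫ ω, scoreMu (fun x => g' x / g x) μ Δ (Z ω) (U ω) *
        scoreLambda l (Z ω) ∂P = 0 := by
      set ψ : ℝ × ℝ → ℝ := fun p => scoreMu (fun x => g' x / g x) μ Δ p.1 p.2 *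
        scoreLambda l p.1 with hψ
      have e0 : (fun x => g x * ψ (0, x + (μ + Δ))) =
          fun x => (g' x / g x * g x) * (1 - l)⁻¹ := by
        funext x
        simp only [hψ, scoreMu, scoreLambda, sub_sub, add_sub_cancel_right, neg_mul,
          neg_zero, zero_mul, sub_zero, zero_sub, one_mul, zero_div]
        rw [div_eq_mul_inv]; ring
      exact master_undef P Z U hZ hU l μ Δ hl0 hl1 g hg.1 hgae hlaw ψ
        (hmML 1) (hmML 0)
        (by rw [e0]; exact hni _ (by positivity))
    exact ⟨entry1, entry2, entry3, entry4, entry5, entry6⟩
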